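/- arXiv:2309.09499 — 2 statements merged into one kernel-verified Lean document; each statement's English description precedes it below -/
import Mathlib

section
/- Let H be a complex Hilbert space, H₀ ⊆ H a closed subspace, H₁ := H₀ᗮ, and α = (α_ij) ∈ (0,∞)^{2×2}. Let (M_n) be a sequence in ℳ(α) that converges to some M ∈ L(H) in the strong operator topology. Then M ∈ ℳ(α), and the four Schur components converge in the weak operator topology: M_{n,00}⁻¹ → M₀₀⁻¹ in WOT on L(H₀), M_{n,10}M_{n,00}⁻¹ → M₁₀M₀₀⁻¹ in WOT on L(H₀,H₁), M_{n,00}⁻¹M_{n,01} → M₀₀⁻¹M₀₁ in WOT on L(H₁,H₀), and M_{n,11} − M_{n,10}M_{n,00}⁻¹M_{n,01} → M₁₁ − M₁₀M₀₀⁻¹M₀₁ in WOT on L(H₁); i.e. M_n → M in the nonlocal H-topology τ(H₀,H₁). -/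
noncomputable section
open Filter Topology ContinuousLinearMap

namespace Paper

/-- `Re S ≥ c` for a bounded operator on a complex Hilbert space:
`Re⟨Sφ,φ⟩ ≥ c‖φ‖²` for all `φ`. -/
def ReGE {K : Type*} [NormedAddCommGroup K] [InnerProductSpace ℂ K]
    (S : K →L[ℂ] K) (c : ℝ) : Prop :=
  ∀ φ : K, c * ‖φ‖ ^ 2 ≤ (inner ℂ (S φ) φ : ℂ).re

variable {H : Type*} [NormedAddCommGroup H] [InnerProductSpace ℂ H] [CompleteSpace H]

/-- Block components of `M ∈ L(H)` w.r.t. the orthogonal decomposition `H = H₀ ⊕ H₀ᗮ`: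
`M_ij = P_i ∘ M ∘ ι_j`. -/
def blk00 (H₀ : Submodule ℂ H) [CompleteSpace H₀] (M : H →L[ℂ] H) : H₀ →L[ℂ] H₀ :=
  (Submodule.orthogonalProjectionOnto H₀) ∘L M ∘L H₀.subtypeL

def blk01 (H₀ : Submodule ℂ H) [CompleteSpace H₀] (M : H →L[ℂ] H) : H₀ᗮ →L[ℂ] H₀ :=
  (Submodule.orthogonalProjectionOnto H₀) ∘L M ∘L H₀ᗮ.subtypeL

def blk10 (H₀ : Submodule ℂ H) [CompleteSpace H₀] (M : H →L[ℂ] H) : H₀ →L[ℂ] H₀ᗮ :=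
  (Submodule.orthogonalProjectionOnto H₀ᗮ) ∘L M ∘L H₀.subtypeL

def blk11 (H₀ : Submodule ℂ H) [CompleteSpace H₀] (M : H →L[ℂ] H) : H₀ᗮ →L[ℂ] H₀ᗮ :=
  (Submodule.orthogonalProjectionOnto H₀ᗮ) ∘L M ∘L H₀ᗮ.subtypeL

/-- `M₀₀⁻¹` (via `Ring.inverse`, which is the genuine inverse when `M₀₀` is invertible). -/
def schur00 (H₀ : Submodule ℂ H) [CompleteSpace H₀] (M : H →L[ℂ] H) : H₀ →L[ℂ] H₀ :=
  Ring.inverse (blk00 H₀ M)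

/-- `M₁₀M₀₀⁻¹`. -/
def schur10 (H₀ : Submodule ℂ H) [CompleteSpace H₀] (M : H →L[ℂ] H) : H₀ →L[ℂ] H₀ᗮ :=
  blk10 H₀ M ∘L schur00 H₀ M

/-- `M₀₀⁻¹M₀₁`. -/
def schur01 (H₀ : Submodule ℂ H) [CompleteSpace H₀] (M : H →L[ℂ] H) : H₀ᗮ →L[ℂ] H₀ :=
  schur00 H₀ M ∘L blk01 H₀ M

/-- `M₁₁ − M₁₀M₀₀⁻¹M₀₁`. -/
def schur11 (H₀ : Submodule ℂ H) [CompleteSpace H₀] (M : H →L[ℂ] H) : H₀ᗮ →L[ℂ] H₀ᗮ :=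
  blk11 H₀ M - blk10 H₀ M ∘L schur00 H₀ M ∘L blk01 H₀ M

/-- `M ∈ ℳ(H₀,H₁)`: both `M₀₀` and `M` are boundedly invertible. -/
def MemM (H₀ : Submodule ℂ H) [CompleteSpace H₀] (M : H →L[ℂ] H) : Prop :=
  IsUnit (blk00 H₀ M) ∧ IsUnit M

/-- `M ∈ ℳ(α)`. -/
def MemMa (H₀ : Submodule ℂ H) [CompleteSpace H₀] (a00 a01 a10 a11 : ℝ)
    (M : H →L[ℂ] H) : Prop :=
  MemM H₀ M ∧ ReGE (blk00 H₀ M) a00 ∧ ReGE (schur00 H₀ M) (1 / a11) ∧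
    ‖schur10 H₀ M‖ ≤ a10 ∧ ‖schur01 H₀ M‖ ≤ a01 ∧
    ReGE (schur11 H₀ M) a00 ∧ ReGE (Ring.inverse (schur11 H₀ M)) (1 / a11)

/-- The weak operator topology on `X →L[ℂ] Y`: the initial topology w.r.t. the maps
`T ↦ ⟨Tφ,ψ⟩` for `φ ∈ X`, `ψ ∈ Y`. -/
def wot (X Y : Type*) [NormedAddCommGroup X] [InnerProductSpace ℂ X]
    [NormedAddCommGroup Y] [InnerProductSpace ℂ Y] :
    TopologicalSpace (X →L[ℂ] Y) :=
  ⨅ (p : X × Y), TopologicalSpace.induced (fun T => (inner ℂ p.2 (T p.1) : ℂ)) inferInstance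

/-- The nonlocal H-topology (Schur topology) `τ(H₀,H₀ᗮ)`: the initial topology w.r.t.
the four Schur components, each carrying the weak operator topology. -/
def tau (H₀ : Submodule ℂ H) [CompleteSpace H₀] : TopologicalSpace (H →L[ℂ] H) :=
  TopologicalSpace.induced (schur00 H₀) (wot H₀ H₀) ⊓
    TopologicalSpace.induced (schur10 H₀) (wot H₀ ↥H₀ᗮ) ⊓
    TopologicalSpace.induced (schur01 H₀) (wot ↥H₀ᗮ H₀) ⊓
    TopologicalSpace.induced (schur11 H₀) (wot ↥H₀ᗮ ↥H₀ᗮ)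

lemma mul_inverse_apply {K : Type*} [NormedAddCommGroup K] [NormedSpace ℂ K]
    {T : K →L[ℂ] K} (h : IsUnit T) (v : K) : T (Ring.inverse T v) = v := by
  have h1 : T * Ring.inverse T = 1 := Ring.mul_inverse_cancel T h
  calc T (Ring.inverse T v) = (T * Ring.inverse T) v := rfl
    _ = v := by rw [h1]; rfl

lemma inverse_mul_apply {K : Type*} [NormedAddCommGroup K] [NormedSpace ℂ K]
    {T : K →L[ℂ] K} (h : IsUnit T) (v : K) : Ring.inverse T (T v) = v := by
  have h1 : Ring.inverse T * T = 1 := Ring.inverse_mul_cancel T h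
  calc Ring.inverse T (T v) = (Ring.inverse T * T) v := rfl
    _ = v := by rw [h1]; rfl

lemma norm_le_of_reGE {K : Type*} [NormedAddCommGroup K] [InnerProductSpace ℂ K]
    {S : K →L[ℂ] K} {c : ℝ} (hc : 0 < c) (h : ReGE S c) (φ : K) : c * ‖φ‖ ≤ ‖S φ‖ := by
  rcases eq_or_ne φ 0 with rfl | hφ
  · simp
  have hφ' : 0 < ‖φ‖ := norm_pos_iff.mpr hφ
  have h1 := h φ
  have h2 : ((inner ℂ (S φ) φ : ℂ)).re ≤ ‖(inner ℂ (S φ) φ : ℂ)‖ := by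
    exact Complex.re_le_norm (inner ℂ (S φ) φ : ℂ)
  have h3 : ‖(inner ℂ (S φ) φ : ℂ)‖ ≤ ‖S φ‖ * ‖φ‖ := norm_inner_le_norm _ _
  have hsq : ‖φ‖ ^ 2 = ‖φ‖ * ‖φ‖ := sq ‖φ‖
  have key : c * ‖φ‖ * ‖φ‖ ≤ ‖S φ‖ * ‖φ‖ := by nlinarith
  exact le_of_mul_le_mul_right key hφ'

lemma isUnit_of_reGE {K : Type*} [NormedAddCommGroup K] [InnerProductSpace ℂ K]
    [CompleteSpace K] {S : K →L[ℂ] K} {c : ℝ} (hc : 0 < c) (h : ReGE S c) : IsUnit S := by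
  have hbb := norm_le_of_reGE hc h
  have hanti : AntilipschitzWith ⟨c⁻¹, by positivity⟩ S := by
    apply ContinuousLinearMap.antilipschitz_of_bound
    intro x
    show ‖x‖ ≤ c⁻¹ * ‖S x‖
    calc ‖x‖ = c⁻¹ * (c * ‖x‖) := by field_simp
      _ ≤ c⁻¹ * ‖S x‖ := mul_le_mul_of_nonneg_left (hbb x) (by positivity)
  have hker : S.ker = ⊥ := LinearMap.ker_eq_bot_of_injective hanti.injective
  have hclosed : IsClosed (S.range : Set K) := by
    rw [LinearMap.coe_range, ContinuousLinearMap.coe_coe]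
    exact hanti.isClosed_range S.uniformContinuous
  haveI : CompleteSpace (S.range) := hclosed.completeSpace_coe
  have horth : (S.range)ᗮ = ⊥ := by
    rw [Submodule.eq_bot_iff]
    intro ψ hψ
    have h0 : (inner ℂ (S ψ) ψ : ℂ) = 0 :=
      (Submodule.mem_orthogonal _ _).mp hψ (S ψ) (LinearMap.mem_range_self S.toLinearMap ψ)
    have h1 := h ψ
    rw [h0] at h1
    simp only [Complex.zero_re] at h1
    have h2 : ‖ψ‖ ^ 2 ≤ 0 := le_of_mul_le_mul_left (by linarith) hc
    have h3 : ‖ψ‖ ^ 2 = 0 := le_antisymm h2 (sq_nonneg _)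
    have h4 : ‖ψ‖ = 0 := by
      have := sq_eq_zero_iff.mp h3
      exact this
    exact norm_eq_zero.mp h4
  have hrange : S.range = ⊤ := by
    have hsup : S.range ⊔ (S.range)ᗮ = ⊤ :=
      Submodule.sup_orthogonal_of_hasOrthogonalProjection
    rwa [horth, sup_bot_eq] at hsup
  let e := ContinuousLinearEquiv.ofBijective S hker hrange
  refine ⟨⟨S, (e.symm : K →L[ℂ] K), ?_, ?_⟩, rfl⟩
  · ext x
    show S ((e.symm : K →L[ℂ] K) x) = x
    exact e.apply_symm_apply x
  · ext x
    show (e.symm : K →L[ℂ] K) (S x) = x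
    exact e.symm_apply_apply x

lemma ringInverse_apply_norm_le {K : Type*} [NormedAddCommGroup K] [InnerProductSpace ℂ K]
    [CompleteSpace K] {S : K →L[ℂ] K} {c : ℝ} (hc : 0 < c) (h : ReGE S c) (ψ : K) :
    ‖Ring.inverse S ψ‖ ≤ c⁻¹ * ‖ψ‖ := by
  have hu := isUnit_of_reGE hc h
  have h1 : S (Ring.inverse S ψ) = ψ := mul_inverse_apply hu ψ
  have h2 := norm_le_of_reGE hc h (Ring.inverse S ψ)
  rw [h1] at h2
  calc ‖Ring.inverse S ψ‖ = c⁻¹ * (c * ‖Ring.inverse S ψ‖) := by field_simp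
    _ ≤ c⁻¹ * ‖ψ‖ := mul_le_mul_of_nonneg_left h2 (by positivity)


lemma reGE_of_tendsto {K : Type*} [NormedAddCommGroup K] [InnerProductSpace ℂ K] {c : ℝ}
    {Tn : ℕ → K →L[ℂ] K} {T : K →L[ℂ] K} (h : ∀ n, ReGE (Tn n) c)
    (hconv : ∀ x, Tendsto (fun n => Tn n x) atTop (𝓝 (T x))) : ReGE T c := by
  intro φ
  have h1 : Tendsto (fun n => (inner ℂ (Tn n φ) φ : ℂ).re) atTop (𝓝 (inner ℂ (T φ) φ : ℂ).re) :=
    (Complex.continuous_re.tendsto _).comp ((hconv φ).inner tendsto_const_nhds)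
  exact ge_of_tendsto' h1 (fun n => h n φ)

lemma tendsto_apply_comp {Y Z : Type*} [NormedAddCommGroup Y] [NormedSpace ℂ Y]
    [NormedAddCommGroup Z] [NormedSpace ℂ Z] {c : ℝ}
    {Tn : ℕ → Y →L[ℂ] Z} {T : Y →L[ℂ] Z}
    (hbd : ∀ n y, ‖Tn n y‖ ≤ c * ‖y‖)
    (hT : ∀ y, Tendsto (fun n => Tn n y) atTop (𝓝 (T y)))
    {un : ℕ → Y} {u : Y} (hu : Tendsto un atTop (𝓝 u)) :
    Tendsto (fun n => Tn n (un n)) atTop (𝓝 (T u)) := by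
  rw [tendsto_iff_norm_sub_tendsto_zero]
  have h1 : ∀ n, ‖Tn n (un n) - T u‖ ≤ c * ‖un n - u‖ + ‖Tn n u - T u‖ := by
    intro n
    have e1 : Tn n (un n) - T u = Tn n (un n - u) + (Tn n u - T u) := by
      rw [map_sub]; abel
    rw [e1]
    exact (norm_add_le _ _).trans (add_le_add (hbd n _) le_rfl)
  refine squeeze_zero (fun n => norm_nonneg _) h1 ?_
  have h2 : Tendsto (fun n => ‖un n - u‖) atTop (𝓝 0) :=
    tendsto_iff_norm_sub_tendsto_zero.mp hu
  have h3 : Tendsto (fun n => ‖Tn n u - T u‖) atTop (𝓝 0) :=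
    tendsto_iff_norm_sub_tendsto_zero.mp (hT u)
  simpa using (h2.const_mul c).add h3

lemma tendsto_ringInverse {K : Type*} [NormedAddCommGroup K] [NormedSpace ℂ K] {c : ℝ}
    {Tn : ℕ → K →L[ℂ] K} {T : K →L[ℂ] K}
    (hTn : ∀ n, IsUnit (Tn n)) (hT : IsUnit T)
    (hbd : ∀ n y, ‖Ring.inverse (Tn n) y‖ ≤ c * ‖y‖)
    (hconv : ∀ x, Tendsto (fun n => Tn n x) atTop (𝓝 (T x))) (x : K) :
    Tendsto (fun n => Ring.inverse (Tn n) x) atTop (𝓝 (Ring.inverse T x)) := by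
  have hTy : T (Ring.inverse T x) = x := mul_inverse_apply hT x
  have key : ∀ n, Ring.inverse (Tn n) x - Ring.inverse T x
      = Ring.inverse (Tn n) (T (Ring.inverse T x) - Tn n (Ring.inverse T x)) := by
    intro n
    rw [map_sub, hTy, inverse_mul_apply (hTn n)]
  rw [tendsto_iff_norm_sub_tendsto_zero]
  have h1 : ∀ n, ‖Ring.inverse (Tn n) x - Ring.inverse T x‖
      ≤ c * ‖T (Ring.inverse T x) - Tn n (Ring.inverse T x)‖ := by
    intro n; rw [key n]; exact hbd n _
  refine squeeze_zero (fun n => norm_nonneg _) h1 ?_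
  have h2 : Tendsto (fun n => ‖T (Ring.inverse T x) - Tn n (Ring.inverse T x)‖) atTop (𝓝 0) := by
    have := tendsto_iff_norm_sub_tendsto_zero.mp (hconv (Ring.inverse T x))
    simpa [norm_sub_rev] using this
  simpa using h2.const_mul c

lemma opNorm_le_of_tendsto {X Y : Type*} [NormedAddCommGroup X] [NormedSpace ℂ X]
    [NormedAddCommGroup Y] [NormedSpace ℂ Y] {c : ℝ} (hc : 0 ≤ c)
    {Tn : ℕ → X →L[ℂ] Y} {T : X →L[ℂ] Y}
    (hn : ∀ n, ‖Tn n‖ ≤ c) (hconv : ∀ x, Tendsto (fun n => Tn n x) atTop (𝓝 (T x))) :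
    ‖T‖ ≤ c := by
  refine T.opNorm_le_bound hc (fun x => ?_)
  refine le_of_tendsto' ((hconv x).norm) (fun n => ?_)
  exact ((Tn n).le_opNorm x).trans (mul_le_mul_of_nonneg_right (hn n) (norm_nonneg x))

lemma isUnit_of_schur {H' K₀ K₁ : Type*} [NormedAddCommGroup H'] [NormedSpace ℂ H']
    [NormedAddCommGroup K₀] [NormedSpace ℂ K₀] [NormedAddCommGroup K₁] [NormedSpace ℂ K₁]
    (M : H' →L[ℂ] H') (e0 : K₀ →L[ℂ] H') (e1 : K₁ →L[ℂ] H')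
    (p0 : H' →L[ℂ] K₀) (p1 : H' →L[ℂ] K₁)
    (A : K₀ →L[ℂ] K₀) (B : K₁ →L[ℂ] K₀) (C : K₀ →L[ℂ] K₁) (D S : K₁ →L[ℂ] K₁)
    (hdec : ∀ x, e0 (p0 x) + e1 (p1 x) = x)
    (hA : ∀ v, p0 (M (e0 v)) = A v) (hC : ∀ v, p1 (M (e0 v)) = C v)
    (hB : ∀ v, p0 (M (e1 v)) = B v) (hD : ∀ v, p1 (M (e1 v)) = D v)
    (hS : ∀ v, S v = D v - C (Ring.inverse A (B v)))
    (hAu : IsUnit A) (hSu : IsUnit S) : IsUnit M := by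
  set A' := Ring.inverse A with hA'def
  set S' := Ring.inverse S with hS'def
  have hAA' : ∀ v, A (A' v) = v := fun v => mul_inverse_apply hAu v
  have hA'A : ∀ v, A' (A v) = v := fun v => inverse_mul_apply hAu v
  have hSS' : ∀ v, S (S' v) = v := fun v => mul_inverse_apply hSu v
  have hS'S : ∀ v, S' (S v) = v := fun v => inverse_mul_apply hSu v
  have hDS : ∀ v, D v = S v + C (A' (B v)) := by
    intro v; rw [hS v]; abel
  have hMp0 : ∀ (a : K₀) (b : K₁), p0 (M (e0 a + e1 b)) = A a + B b := by
    intro a b; rw [map_add M, map_add p0, hA, hB]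
  have hMp1 : ∀ (a : K₀) (b : K₁), p1 (M (e0 a + e1 b)) = C a + D b := by
    intro a b; rw [map_add M, map_add p1, hC, hD]
  let N : H' →L[ℂ] H' :=
    e0 ∘L (A' ∘L p0 + A' ∘L (B ∘L (S' ∘L (C ∘L (A' ∘L p0)))) - A' ∘L (B ∘L (S' ∘L p1)))
      + e1 ∘L (S' ∘L p1 - S' ∘L (C ∘L (A' ∘L p0)))
  have hNx : ∀ x, N x = e0 (A' (p0 x) + A' (B (S' (C (A' (p0 x))))) - A' (B (S' (p1 x))))
      + e1 (S' (p1 x) - S' (C (A' (p0 x)))) := by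
    intro x
    simp [N, ContinuousLinearMap.comp_apply, ContinuousLinearMap.add_apply,
      ContinuousLinearMap.sub_apply]
  have hMN : ∀ x, M (N x) = x := by
    intro x
    have h0 : p0 (M (N x)) = p0 x := by
      rw [hNx x, hMp0]
      simp only [map_sub, map_add, hAA']
      abel
    have h1 : p1 (M (N x)) = p1 x := by
      rw [hNx x, hMp1]
      simp only [map_sub, map_add, hDS, hSS']
      abel
    calc M (N x) = e0 (p0 (M (N x))) + e1 (p1 (M (N x))) := (hdec (M (N x))).symm
      _ = e0 (p0 x) + e1 (p1 x) := by rw [h0, h1]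
      _ = x := hdec x
  have hNM : ∀ x, N (M x) = x := by
    intro x
    have hm0 : p0 (M x) = A (p0 x) + B (p1 x) := by
      conv_lhs => rw [← hdec x]
      exact hMp0 _ _
    have hm1 : p1 (M x) = C (p0 x) + D (p1 x) := by
      conv_lhs => rw [← hdec x]
      exact hMp1 _ _
    have hA'm : A' (p0 (M x)) = p0 x + A' (B (p1 x)) := by
      rw [hm0, map_add, hA'A]
    have hCA'm : C (A' (p0 (M x))) = C (p0 x) + C (A' (B (p1 x))) := by
      rw [hA'm, map_add]
    have hsub : p1 (M x) - C (A' (p0 (M x))) = S (p1 x) := by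
      rw [hm1, hCA'm, hS]; abel
    have hkey : S' (p1 (M x)) - S' (C (A' (p0 (M x)))) = p1 x := by
      rw [← map_sub, hsub, hS'S]
    have hkey2 : A' (B (S' (C (A' (p0 (M x)))))) - A' (B (S' (p1 (M x)))) = -(A' (B (p1 x))) := by
      rw [← map_sub, ← map_sub, ← map_sub]
      have h5 : C (A' (p0 (M x))) - p1 (M x) = -(S (p1 x)) := by rw [← hsub]; abel
      rw [h5, map_neg, hS'S, map_neg, map_neg]
    rw [hNx (M x), add_sub_assoc, hkey2, hkey, hA'm]
    have h6 : p0 x + A' (B (p1 x)) + -(A' (B (p1 x))) = p0 x := by abel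
    rw [h6]
    exact hdec x
  refine ⟨⟨M, N, ?_, ?_⟩, rfl⟩
  · ext x
    simpa [ContinuousLinearMap.mul_apply, ContinuousLinearMap.one_apply] using hMN x
  · ext x
    simpa [ContinuousLinearMap.mul_apply, ContinuousLinearMap.one_apply] using hNM x


lemma tendsto_inf_topology {α β : Type*} {l : Filter β} {f : β → α} {a : α}
    (t₁ t₂ : TopologicalSpace α) (h₁ : Tendsto f l (@nhds _ t₁ a))
    (h₂ : Tendsto f l (@nhds _ t₂ a)) : Tendsto f l (@nhds _ (t₁ ⊓ t₂) a) := by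
  rw [_root_.nhds_inf (t₁ := t₁) (t₂ := t₂)]
  exact tendsto_inf.mpr ⟨h₁, h₂⟩

lemma tendsto_induced_topology {α β γ : Type*} {l : Filter β} {f : β → α} {a : α}
    (g : α → γ) (t : TopologicalSpace γ) (h : Tendsto (fun x => g (f x)) l (@nhds _ t (g a))) :
    Tendsto f l (@nhds _ (TopologicalSpace.induced g t) a) := by
  have e : @nhds _ (TopologicalSpace.induced g t) a = Filter.comap g (@nhds _ t (g a)) :=
    nhds_induced g a
  rw [e, tendsto_comap_iff]
  exact h

lemma tendsto_wot {X Y : Type*} [NormedAddCommGroup X] [InnerProductSpace ℂ X]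
    [NormedAddCommGroup Y] [InnerProductSpace ℂ Y]
    {f : ℕ → X →L[ℂ] Y} {g : X →L[ℂ] Y}
    (h : ∀ x, Tendsto (fun n => f n x) atTop (𝓝 (g x))) :
    Tendsto f atTop (@nhds _ (wot X Y) g) := by
  unfold wot
  rw [_root_.nhds_iInf, tendsto_iInf]
  intro p
  rw [nhds_induced, tendsto_comap_iff]
  exact Filter.Tendsto.inner (𝕜 := ℂ) tendsto_const_nhds (h p.1)

/-- If a sequence in `ℳ(α)` converges in the strong operator topology to
`M ∈ L(H)`, then `M ∈ ℳ(α)` and the four Schur components converge in the weak operator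
topology, i.e. `Mₙ → M` in the nonlocal H-topology `τ(H₀,H₁)`. -/
theorem statement_0 (H₀ : Submodule ℂ H) [CompleteSpace H₀]
    (a00 a01 a10 a11 : ℝ) (ha00 : 0 < a00) (ha01 : 0 < a01) (ha10 : 0 < a10)
    (ha11 : 0 < a11)
    (Mn : ℕ → H →L[ℂ] H) (hMn : ∀ n, MemMa H₀ a00 a01 a10 a11 (Mn n))
    (M : H →L[ℂ] H)
    (hsot : ∀ x : H, Tendsto (fun n => Mn n x) atTop (𝓝 (M x))) :
    MemMa H₀ a00 a01 a10 a11 M ∧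
    Tendsto (fun n => schur00 H₀ (Mn n)) atTop (@nhds _ (wot H₀ H₀) (schur00 H₀ M)) ∧
    Tendsto (fun n => schur10 H₀ (Mn n)) atTop (@nhds _ (wot H₀ ↥H₀ᗮ) (schur10 H₀ M)) ∧
    Tendsto (fun n => schur01 H₀ (Mn n)) atTop (@nhds _ (wot ↥H₀ᗮ H₀) (schur01 H₀ M)) ∧
    Tendsto (fun n => schur11 H₀ (Mn n)) atTop (@nhds _ (wot ↥H₀ᗮ ↥H₀ᗮ) (schur11 H₀ M)) ∧
    Tendsto Mn atTop (@nhds _ (tau H₀) M) := by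
  haveI : CompleteSpace ↥H₀ᗮ := H₀.isClosed_orthogonal.completeSpace_coe
  have hptbd : ∀ x : H, ∃ C, ∀ n, ‖Mn n x‖ ≤ C := by
    intro x
    obtain ⟨C, hC⟩ := ((hsot x).norm).bddAbove_range
    exact ⟨C, fun n => hC ⟨n, rfl⟩⟩
  obtain ⟨CM, hCM⟩ := banach_steinhaus hptbd
  have hb00 : ∀ x : H₀, Tendsto (fun n => blk00 H₀ (Mn n) x) atTop (𝓝 (blk00 H₀ M x)) :=
    fun x => ((Submodule.orthogonalProjectionOnto H₀).continuous.tendsto _).comp (hsot ↑x)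
  have hb01 : ∀ x : ↥H₀ᗮ, Tendsto (fun n => blk01 H₀ (Mn n) x) atTop (𝓝 (blk01 H₀ M x)) :=
    fun x => ((Submodule.orthogonalProjectionOnto H₀).continuous.tendsto _).comp (hsot ↑x)
  have hb10 : ∀ x : H₀, Tendsto (fun n => blk10 H₀ (Mn n) x) atTop (𝓝 (blk10 H₀ M x)) :=
    fun x => ((Submodule.orthogonalProjectionOnto H₀ᗮ).continuous.tendsto _).comp (hsot ↑x)
  have hb11 : ∀ x : ↥H₀ᗮ, Tendsto (fun n => blk11 H₀ (Mn n) x) atTop (𝓝 (blk11 H₀ M x)) :=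
    fun x => ((Submodule.orthogonalProjectionOnto H₀ᗮ).continuous.tendsto _).comp (hsot ↑x)
  have hb10bd : ∀ n (y : H₀), ‖blk10 H₀ (Mn n) y‖ ≤ CM * ‖y‖ := by
    intro n y
    have h2 : ‖(Submodule.orthogonalProjectionOnto H₀ᗮ) (Mn n ↑y)‖ ≤ ‖Submodule.orthogonalProjectionOnto H₀ᗮ‖ * ‖Mn n ↑y‖ :=
      (Submodule.orthogonalProjectionOnto H₀ᗮ).le_opNorm _
    have h3 := Submodule.orthogonalProjectionOnto_norm_le H₀ᗮ
    calc ‖blk10 H₀ (Mn n) y‖ = ‖(Submodule.orthogonalProjectionOnto H₀ᗮ) (Mn n ↑y)‖ := rfl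
      _ ≤ ‖Submodule.orthogonalProjectionOnto H₀ᗮ‖ * ‖Mn n ↑y‖ := h2
      _ ≤ 1 * ‖Mn n ↑y‖ := mul_le_mul_of_nonneg_right h3 (norm_nonneg _)
      _ = ‖Mn n (↑y : H)‖ := one_mul _
      _ ≤ ‖Mn n‖ * ‖(↑y : H)‖ := (Mn n).le_opNorm _
      _ ≤ CM * ‖y‖ := mul_le_mul_of_nonneg_right (hCM n) (norm_nonneg _)
  have hAn_re : ∀ n, ReGE (blk00 H₀ (Mn n)) a00 := fun n => (hMn n).2.1
  have hAn_u : ∀ n, IsUnit (blk00 H₀ (Mn n)) := fun n => (hMn n).1.1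
  have hAninv_bd : ∀ n (ψ : H₀), ‖Ring.inverse (blk00 H₀ (Mn n)) ψ‖ ≤ a00⁻¹ * ‖ψ‖ :=
    fun n ψ => ringInverse_apply_norm_le ha00 (hAn_re n) ψ
  have hA_re : ReGE (blk00 H₀ M) a00 := reGE_of_tendsto hAn_re hb00
  have hA_u : IsUnit (blk00 H₀ M) := isUnit_of_reGE ha00 hA_re
  have hs00 : ∀ x : H₀, Tendsto (fun n => schur00 H₀ (Mn n) x) atTop (𝓝 (schur00 H₀ M x)) :=
    fun x => tendsto_ringInverse hAn_u hA_u hAninv_bd hb00 x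
  have hs00_re : ReGE (schur00 H₀ M) (1 / a11) := reGE_of_tendsto (fun n => (hMn n).2.2.1) hs00
  have hs10 : ∀ x : H₀, Tendsto (fun n => schur10 H₀ (Mn n) x) atTop (𝓝 (schur10 H₀ M x)) :=
    fun x => tendsto_apply_comp hb10bd hb10 (hs00 x)
  have h10norm : ‖schur10 H₀ M‖ ≤ a10 :=
    opNorm_le_of_tendsto (le_of_lt ha10) (fun n => (hMn n).2.2.2.1) hs10
  have hs01 : ∀ x : ↥H₀ᗮ, Tendsto (fun n => schur01 H₀ (Mn n) x) atTop (𝓝 (schur01 H₀ M x)) :=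
    fun x => tendsto_apply_comp hAninv_bd hs00 (hb01 x)
  have h01norm : ‖schur01 H₀ M‖ ≤ a01 :=
    opNorm_le_of_tendsto (le_of_lt ha01) (fun n => (hMn n).2.2.2.2.1) hs01
  have goal_eq : ∀ (N : H →L[ℂ] H) (x : ↥H₀ᗮ),
      schur11 H₀ N x = blk11 H₀ N x - blk10 H₀ N (schur00 H₀ N (blk01 H₀ N x)) := by
    intro N x
    simp [schur11]
  have hs11 : ∀ x : ↥H₀ᗮ, Tendsto (fun n => schur11 H₀ (Mn n) x) atTop (𝓝 (schur11 H₀ M x)) := by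
    intro x
    have hinner : Tendsto (fun n => blk10 H₀ (Mn n) (schur00 H₀ (Mn n) (blk01 H₀ (Mn n) x)))
        atTop (𝓝 (blk10 H₀ M (schur00 H₀ M (blk01 H₀ M x)))) :=
      tendsto_apply_comp hb10bd hb10 (tendsto_apply_comp hAninv_bd hs00 (hb01 x))
    have h := (hb11 x).sub hinner
    simp only [goal_eq]
    exact h
  have hs11_re : ReGE (schur11 H₀ M) a00 := reGE_of_tendsto (fun n => (hMn n).2.2.2.2.2.1) hs11
  have hS_u : IsUnit (schur11 H₀ M) := isUnit_of_reGE ha00 hs11_re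
  have hSn_u : ∀ n, IsUnit (schur11 H₀ (Mn n)) :=
    fun n => isUnit_of_reGE ha00 ((hMn n).2.2.2.2.2.1)
  have hSninv_bd : ∀ n (ψ : ↥H₀ᗮ), ‖Ring.inverse (schur11 H₀ (Mn n)) ψ‖ ≤ a00⁻¹ * ‖ψ‖ :=
    fun n ψ => ringInverse_apply_norm_le ha00 ((hMn n).2.2.2.2.2.1) ψ
  have hs11inv : ∀ x : ↥H₀ᗮ, Tendsto (fun n => Ring.inverse (schur11 H₀ (Mn n)) x) atTop
      (𝓝 (Ring.inverse (schur11 H₀ M) x)) :=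
    fun x => tendsto_ringInverse hSn_u hS_u hSninv_bd hs11 x
  have hs11inv_re : ReGE (Ring.inverse (schur11 H₀ M)) (1 / a11) :=
    reGE_of_tendsto (fun n => (hMn n).2.2.2.2.2.2) hs11inv
  have hM_u : IsUnit M :=
    isUnit_of_schur M H₀.subtypeL H₀ᗮ.subtypeL (Submodule.orthogonalProjectionOnto H₀)
      (Submodule.orthogonalProjectionOnto H₀ᗮ)
      (blk00 H₀ M) (blk01 H₀ M) (blk10 H₀ M) (blk11 H₀ M) (schur11 H₀ M)
      (fun x => H₀.starProjection_add_starProjection_orthogonal x)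
      (fun v => rfl) (fun v => rfl) (fun v => rfl) (fun v => rfl)
      (fun v => by simp [schur11, schur00]) hA_u hS_u
  refine ⟨⟨⟨hA_u, hM_u⟩, hA_re, hs00_re, h10norm, h01norm, hs11_re, hs11inv_re⟩,
    tendsto_wot hs00, tendsto_wot hs10, tendsto_wot hs01, tendsto_wot hs11, ?_⟩
  exact tendsto_inf_topology _ _
    (tendsto_inf_topology _ _
      (tendsto_inf_topology _ _
        (tendsto_induced_topology _ _ (tendsto_wot hs00))
        (tendsto_induced_topology _ _ (tendsto_wot hs10)))
      (tendsto_induced_topology _ _ (tendsto_wot hs01)))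
    (tendsto_induced_topology _ _ (tendsto_wot hs11))


end Paper
end
end

section
/- Let H be a separable complex Hilbert space, c, d > 0, and (T_n)_{n∈ℕ} a sequence in L(H) with Re T_n ≥ c and Re T_n⁻¹ ≥ d for all n (each T_n is boundedly invertible since Re T_n ≥ c). Let A : dom(A) ⊆ H → H be a skew-selfadjoint operator and T ∈ L(H) such that T + A (with domain dom(A)) is boundedly invertible. If (T_n + A)⁻¹ converges to (T + A)⁻¹ in the weak operator topology on L(H), then Re T ≥ c, T is boundedly invertible, and Re T⁻¹ ≥ d. -/
noncomputable section
open Filter Topology ContinuousLinearMap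

namespace Paper

/-- `B ∈ L(H)` is a (two-sided) bounded inverse of the (possibly unbounded) linear
operator `S`. -/
def IsBoundedInverse {H : Type*} [NormedAddCommGroup H] [InnerProductSpace ℂ H]
    (S : H →ₗ.[ℂ] H) (B : H →L[ℂ] H) : Prop :=
  (∀ u : S.domain, B (S u) = (u : H)) ∧
    ∀ y : H, ∃ hy : B y ∈ S.domain, S ⟨B y, hy⟩ = y

/-- The operator `T + A` with domain `dom(A)`, for `T` bounded and `A` a linear
operator with domain `A.domain`. -/
def addA {H : Type*} [NormedAddCommGroup H] [InnerProductSpace ℂ H]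
    (T : H →L[ℂ] H) (A : H →ₗ.[ℂ] H) : H →ₗ.[ℂ] H :=
  (T : H →ₗ[ℂ] H).toPMap A.domain + A

variable {H : Type*} [NormedAddCommGroup H] [InnerProductSpace ℂ H] [CompleteSpace H]

/-! ### Auxiliary lemmas -/

lemma skew_inner {A : H →ₗ.[ℂ] H} (hdense : Dense (A.domain : Set H)) (hskew : A.adjoint = -A)
    (x y : A.domain) : (inner ℂ (A x : H) (y : H) : ℂ) = -(inner ℂ (x : H) (A y : H) : ℂ) := by
  have hfa : (-A).IsFormalAdjoint A := hskew ▸ LinearPMap.adjoint_isFormalAdjoint hdense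
  have h := hfa x y
  rw [LinearPMap.neg_apply, inner_neg_left] at h
  rw [← h, neg_neg]

lemma skew_re_zero {A : H →ₗ.[ℂ] H} (hdense : Dense (A.domain : Set H)) (hskew : A.adjoint = -A)
    (u : A.domain) : (inner ℂ (A u : H) (u : H) : ℂ).re = 0 := by
  have h := skew_inner hdense hskew u u
  have h2 : (inner ℂ (u : H) (A u : H) : ℂ) = (starRingEnd ℂ) (inner ℂ (A u : H) (u : H) : ℂ) :=
    (inner_conj_symm _ _).symm
  rw [h2] at h
  have := congrArg Complex.re h
  simp only [Complex.neg_re, Complex.conj_re] at this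
  linarith

lemma skew_re_zero' {A : H →ₗ.[ℂ] H} (hdense : Dense (A.domain : Set H)) (hskew : A.adjoint = -A)
    (u : A.domain) : (inner ℂ (u : H) (A u : H) : ℂ).re = 0 := by
  have h2 : (inner ℂ (u : H) (A u : H) : ℂ) = (starRingEnd ℂ) (inner ℂ (A u : H) (u : H) : ℂ) :=
    (inner_conj_symm _ _).symm
  rw [h2, Complex.conj_re, skew_re_zero hdense hskew]

lemma re_inner_le (x y : H) : (inner ℂ x y : ℂ).re ≤ ‖x‖ * ‖y‖ := by
  calc (inner ℂ x y : ℂ).re ≤ ‖(inner ℂ x y : ℂ)‖ := Complex.re_le_norm _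
    _ ≤ ‖x‖ * ‖y‖ := norm_inner_le_norm _ _

lemma lim_le {d : ℝ} (hd : 0 < d) (x : ℕ → H) (x₀ : H) (r : ℕ → ℝ) (r₀ : ℝ)
    (hr : ∀ n, d * ‖x n‖ ^ 2 ≤ r n)
    (hrlim : Tendsto r atTop (𝓝 r₀))
    (hxlim : Tendsto (fun n => (inner ℂ x₀ (x n) : ℂ).re) atTop (𝓝 (‖x₀‖ ^ 2))) :
    d * ‖x₀‖ ^ 2 ≤ r₀ := by
  have key : ∀ n, d * ((inner ℂ x₀ (x n) : ℂ).re) ^ 2 ≤ ‖x₀‖ ^ 2 * r n := by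
    intro n
    have h1 : |(inner ℂ x₀ (x n) : ℂ).re| ≤ ‖x₀‖ * ‖x n‖ := by
      calc |(inner ℂ x₀ (x n) : ℂ).re| ≤ ‖(inner ℂ x₀ (x n) : ℂ)‖ := Complex.abs_re_le_norm _
        _ ≤ ‖x₀‖ * ‖x n‖ := norm_inner_le_norm _ _
    have h2 : ((inner ℂ x₀ (x n) : ℂ).re) ^ 2 ≤ (‖x₀‖ * ‖x n‖) ^ 2 := by
      rw [← sq_abs]
      exact pow_le_pow_left₀ (abs_nonneg _) h1 2
    have h3 := hr n
    nlinarith [norm_nonneg x₀, norm_nonneg (x n), sq_nonneg (‖x₀‖ * ‖x n‖)]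
  have hlim2 : Tendsto (fun n => d * ((inner ℂ x₀ (x n) : ℂ).re) ^ 2) atTop
      (𝓝 (d * (‖x₀‖ ^ 2) ^ 2)) := (hxlim.pow 2).const_mul d
  have hlim3 : Tendsto (fun n => ‖x₀‖ ^ 2 * r n) atTop (𝓝 (‖x₀‖ ^ 2 * r₀)) := hrlim.const_mul _
  have hfin : d * (‖x₀‖ ^ 2) ^ 2 ≤ ‖x₀‖ ^ 2 * r₀ := le_of_tendsto_of_tendsto' hlim2 hlim3 key
  rcases eq_or_lt_of_le (norm_nonneg x₀) with h0 | h0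
  · have hr0 : 0 ≤ r₀ :=
      le_of_tendsto_of_tendsto' tendsto_const_nhds hrlim
        (fun n => le_trans (by positivity) (hr n))
    rw [← h0]
    simpa using hr0
  · have h0sq : 0 < ‖x₀‖ ^ 2 := by positivity
    nlinarith

lemma weak_limit_of_dense {x : ℕ → H} {x₀ : H} {M : ℝ}
    (hM : ∀ n, ‖x n‖ ≤ M) {D : Set H} (hD : Dense D)
    (h : ∀ ψ ∈ D, Tendsto (fun n => (inner ℂ ψ (x n) : ℂ)) atTop (𝓝 (inner ℂ ψ x₀ : ℂ)))
    (ψ : H) : Tendsto (fun n => (inner ℂ ψ (x n) : ℂ)) atTop (𝓝 (inner ℂ ψ x₀ : ℂ)) := by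
  rw [Metric.tendsto_atTop]
  intro ε hε
  have hMx : 0 ≤ M := le_trans (norm_nonneg _) (hM 0)
  set C : ℝ := M + ‖x₀‖ + 1 with hC
  have hC0 : 0 < C := by positivity
  obtain ⟨ψ', hψ'D, hψ'⟩ : ∃ y ∈ D, dist ψ y < ε / (3 * C) :=
    Metric.mem_closure_iff.mp (hD ψ) _ (by positivity)
  have hψ'n : ‖ψ - ψ'‖ < ε / (3 * C) := by rwa [dist_eq_norm] at hψ'
  have hlim := h ψ' hψ'D
  rw [Metric.tendsto_atTop] at hlim
  obtain ⟨N, hN⟩ := hlim (ε / 3) (by positivity)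
  refine ⟨N, fun n hn => ?_⟩
  have h1 : dist (inner ℂ ψ (x n) : ℂ) (inner ℂ ψ' (x n) : ℂ) ≤ ε / (3 * C) * M := by
    rw [dist_eq_norm, ← inner_sub_left]
    calc ‖(inner ℂ (ψ - ψ') (x n) : ℂ)‖ ≤ ‖ψ - ψ'‖ * ‖x n‖ := norm_inner_le_norm _ _
      _ ≤ ε / (3 * C) * M := mul_le_mul hψ'n.le (hM n) (norm_nonneg _) (by positivity)
  have h3 : dist (inner ℂ ψ' x₀ : ℂ) (inner ℂ ψ x₀ : ℂ) ≤ ε / (3 * C) * ‖x₀‖ := by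
    rw [dist_eq_norm, ← inner_sub_left]
    calc ‖(inner ℂ (ψ' - ψ) x₀ : ℂ)‖ ≤ ‖ψ' - ψ‖ * ‖x₀‖ := norm_inner_le_norm _ _
      _ ≤ ε / (3 * C) * ‖x₀‖ := by
          rw [norm_sub_rev]
          exact mul_le_mul_of_nonneg_right hψ'n.le (norm_nonneg _)
  have h2 := hN n hn
  have htri := dist_triangle4 (inner ℂ ψ (x n) : ℂ) (inner ℂ ψ' (x n) : ℂ)
    (inner ℂ ψ' x₀ : ℂ) (inner ℂ ψ x₀ : ℂ)
  have hδC : ε / (3 * C) * C = ε / 3 := by field_simp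
  have hsum : ε / (3 * C) * M + ε / (3 * C) * ‖x₀‖ + ε / (3 * C) = ε / (3 * C) * C := by
    rw [hC]; ring
  have hδ0 : 0 < ε / (3 * C) := by positivity
  linarith

theorem statement_11 [TopologicalSpace.SeparableSpace H]
    (c d : ℝ) (hc : 0 < c) (hd : 0 < d)
    (Tn : ℕ → H →L[ℂ] H)
    (hTinv : ∀ n, IsUnit (Tn n))
    (hTc : ∀ n, ReGE (Tn n) c)
    (hTd : ∀ n, ReGE (Ring.inverse (Tn n)) d)
    (A : H →ₗ.[ℂ] H) (hdense : Dense (A.domain : Set H)) (hskew : A.adjoint = -A)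
    (T : H →L[ℂ] H)
    (S : H →L[ℂ] H) (hS : IsBoundedInverse (addA T A) S)
    (Sn : ℕ → H →L[ℂ] H) (hSn : ∀ n, IsBoundedInverse (addA (Tn n) A) (Sn n))
    (hwot : ∀ φ ψ : H,
      Tendsto (fun n => (inner ℂ ψ (Sn n φ) : ℂ)) atTop (𝓝 (inner ℂ ψ (S φ) : ℂ))) :
    ReGE T c ∧ IsUnit T ∧ ReGE (Ring.inverse T) d := by
  classical
  -- domain of `addA R A` is `A.domain`
  have hmem : ∀ (R : H →L[ℂ] H) (x : H), x ∈ (addA R A).domain ↔ x ∈ A.domain := by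
    intro R x
    show x ∈ ((R : H →ₗ[ℂ] H).toPMap A.domain).domain ⊓ A.domain ↔ _
    rw [LinearMap.toPMap_domain]
    simp
  have happ : ∀ (R : H →L[ℂ] H) (x : H) (hx : x ∈ A.domain) (hx' : x ∈ (addA R A).domain),
      addA R A ⟨x, hx'⟩ = R x + A ⟨x, hx⟩ := fun R x hx hx' => rfl
  -- the two pointwise inequalities on the domain of `A`
  have main : ∀ u : A.domain,
      c * ‖(u : H)‖ ^ 2 ≤ (inner ℂ (T (u : H)) (u : H) : ℂ).re ∧
      d * ‖T (u : H)‖ ^ 2 ≤ (inner ℂ ((u : H)) (T (u : H)) : ℂ).re := by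
    intro u
    set φ : H := T (u : H) + A u with hφdef
    have hu' : (u : H) ∈ (addA T A).domain := (hmem T u).2 u.2
    have hSφ : S φ = (u : H) := by
      have := hS.1 ⟨(u : H), hu'⟩
      rwa [happ T (u : H) u.2 hu'] at this
    choose hy heq using fun n => (hSn n).2 φ
    set un : ℕ → H := fun n => Sn n φ with hun
    have hmemn : ∀ n, un n ∈ A.domain := fun n => (hmem _ _).1 (hy n)
    have heq' : ∀ n, Tn n (un n) + A ⟨un n, hmemn n⟩ = φ := by
      intro n
      rw [← happ (Tn n) (un n) (hmemn n) (hy n)]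
      exact heq n
    have hw : ∀ ψ : H, Tendsto (fun n => (inner ℂ ψ (un n) : ℂ)) atTop (𝓝 (inner ℂ ψ (u : H) : ℂ)) := by
      intro ψ
      have := hwot φ ψ
      rwa [hSφ] at this
    -- the basic inequality for part 1
    set r : ℕ → ℝ := fun n => (inner ℂ φ (un n) : ℂ).re with hrdef
    have hTnun : ∀ n, Tn n (un n) = φ - A ⟨un n, hmemn n⟩ := fun n => eq_sub_of_add_eq (heq' n)
    have hrn : ∀ n, c * ‖un n‖ ^ 2 ≤ r n := by
      intro n
      have h := hTc n (un n)
      rw [hTnun n, inner_sub_left] at h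
      have hz := skew_re_zero hdense hskew ⟨un n, hmemn n⟩
      simp only [Complex.sub_re] at h
      simpa [hrdef, hz] using h
    have hrlim : Tendsto r atTop (𝓝 ((inner ℂ φ (u : H) : ℂ).re)) :=
      (Complex.continuous_re.tendsto _).comp (hw φ)
    have hxlim1 : Tendsto (fun n => (inner ℂ (u : H) (un n) : ℂ).re) atTop (𝓝 (‖(u : H)‖ ^ 2)) := by
      have := (Complex.continuous_re.tendsto _).comp (hw (u : H))
      have hself : (inner ℂ (u : H) (u : H) : ℂ).re = ‖(u : H)‖ ^ 2 := by
        have := inner_self_eq_norm_sq (𝕜 := ℂ) (u : H)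
        simpa using this
      rwa [Function.comp_def, hself] at this
    have hpart1 : c * ‖(u : H)‖ ^ 2 ≤ (inner ℂ φ (u : H) : ℂ).re :=
      lim_le hc un (u : H) r _ hrn hrlim hxlim1
    have hφu : (inner ℂ φ (u : H) : ℂ).re = (inner ℂ (T (u : H)) (u : H) : ℂ).re := by
      rw [hφdef, inner_add_left, Complex.add_re, skew_re_zero hdense hskew u, add_zero]
    constructor
    · rw [← hφu]; exact hpart1
    -- part 3
    · set x : ℕ → H := fun n => Tn n (un n) with hxdef
      set x₀ : H := T (u : H) with hx₀def
      have hx₀ : x₀ = φ - A u := by rw [hx₀def, hφdef]; abel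
      -- d ‖x n‖² ≤ r n
      have hdx : ∀ n, d * ‖x n‖ ^ 2 ≤ r n := by
        intro n
        have h := hTd n (x n)
        have hinv : Ring.inverse (Tn n) (x n) = un n := by
          have h1 : Ring.inverse (Tn n) * Tn n = 1 := Ring.inverse_mul_cancel _ (hTinv n)
          calc Ring.inverse (Tn n) (x n) = (Ring.inverse (Tn n) * Tn n) (un n) := rfl
            _ = un n := by rw [h1]; rfl
        rw [hinv] at h
        have hxn : x n = φ - A ⟨un n, hmemn n⟩ := hTnun n
        have hre : (inner ℂ (un n) (x n) : ℂ).re = r n := by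
          rw [hxn, inner_sub_right, Complex.sub_re,
            skew_re_zero' hdense hskew ⟨un n, hmemn n⟩, sub_zero, hrdef]
          have : (inner ℂ (un n) φ : ℂ) = (starRingEnd ℂ) (inner ℂ φ (un n) : ℂ) :=
            (inner_conj_symm _ _).symm
          rw [this, Complex.conj_re]
        rw [hre] at h
        exact h
      -- uniform bound on ‖x n‖
      have hunb : ∀ n, c * ‖un n‖ ≤ ‖φ‖ := by
        intro n
        have h1 := hrn n
        have h2 : r n ≤ ‖φ‖ * ‖un n‖ := re_inner_le φ (un n)
        nlinarith [norm_nonneg (un n), norm_nonneg φ]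
      set M : ℝ := Real.sqrt (‖φ‖ ^ 2 / (c * d)) with hM
      have hbx : ∀ n, ‖x n‖ ≤ M := by
        intro n
        have h1 := hdx n
        have h2 : r n ≤ ‖un n‖ * ‖φ‖ := by
          have := re_inner_le (un n) φ
          calc r n = (inner ℂ (un n) φ : ℂ).re := by
                rw [hrdef]
                have h3 : (inner ℂ (un n) φ : ℂ) = (starRingEnd ℂ) (inner ℂ φ (un n) : ℂ) :=
                  (inner_conj_symm _ _).symm
                rw [h3, Complex.conj_re]
            _ ≤ ‖un n‖ * ‖φ‖ := this
        have h3 := hunb n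
        have h4 : ‖x n‖ ^ 2 ≤ ‖φ‖ ^ 2 / (c * d) := by
          rw [le_div_iff₀ (by positivity)]
          nlinarith [mul_le_mul_of_nonneg_right h3 (norm_nonneg φ),
            mul_le_mul_of_nonneg_left (h1.trans h2) hc.le]
        calc ‖x n‖ = Real.sqrt (‖x n‖ ^ 2) := by rw [Real.sqrt_sq (norm_nonneg _)]
          _ ≤ M := Real.sqrt_le_sqrt h4
      -- weak convergence of x n to x₀
      have hwx : ∀ ψ : H, Tendsto (fun n => (inner ℂ ψ (x n) : ℂ)) atTop (𝓝 (inner ℂ ψ x₀ : ℂ)) := by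
        apply weak_limit_of_dense hbx hdense
        intro ψ hψ
        have hkey : ∀ n, (inner ℂ ψ (x n) : ℂ) =
            (inner ℂ ψ φ : ℂ) + (inner ℂ ((A ⟨ψ, hψ⟩ : H)) (un n) : ℂ) := by
          intro n
          have hsk := skew_inner hdense hskew (⟨ψ, hψ⟩ : A.domain) ⟨un n, hmemn n⟩
          have hxn : x n = φ - (A ⟨un n, hmemn n⟩ : H) := hTnun n
          rw [hxn, inner_sub_right,
            show (inner ℂ ψ ((A ⟨un n, hmemn n⟩ : H)) : ℂ)
                = -(inner ℂ ((A ⟨ψ, hψ⟩ : H)) (un n) : ℂ) by rw [hsk]; ring]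
          ring
        have hlimit : Tendsto
            (fun n => (inner ℂ ψ φ : ℂ) + (inner ℂ ((A ⟨ψ, hψ⟩ : H)) (un n) : ℂ)) atTop
            (𝓝 ((inner ℂ ψ φ : ℂ) + (inner ℂ ((A ⟨ψ, hψ⟩ : H)) (u : H) : ℂ))) :=
          (hw _).const_add _
        have hx₀eq : (inner ℂ ψ x₀ : ℂ) =
            (inner ℂ ψ φ : ℂ) + (inner ℂ ((A ⟨ψ, hψ⟩ : H)) (u : H) : ℂ) := by
          have hsk := skew_inner hdense hskew (⟨ψ, hψ⟩ : A.domain) u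
          rw [hx₀, inner_sub_right,
            show (inner ℂ ψ ((A u : H)) : ℂ)
                = -(inner ℂ ((A ⟨ψ, hψ⟩ : H)) (u : H) : ℂ) by rw [hsk]; ring]
          ring
        rw [hx₀eq]
        exact Tendsto.congr (fun n => (hkey n).symm) hlimit
      -- conclude
      have hxlim2 : Tendsto (fun n => (inner ℂ x₀ (x n) : ℂ).re) atTop (𝓝 (‖x₀‖ ^ 2)) := by
        have := (Complex.continuous_re.tendsto _).comp (hwx x₀)
        have hself : (inner ℂ x₀ x₀ : ℂ).re = ‖x₀‖ ^ 2 := by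
          have := inner_self_eq_norm_sq (𝕜 := ℂ) x₀
          simpa using this
        rwa [Function.comp_def, hself] at this
      have hfin : d * ‖x₀‖ ^ 2 ≤ (inner ℂ φ (u : H) : ℂ).re :=
        lim_le hd x x₀ r _ hdx hrlim hxlim2
      have hgoal : (inner ℂ φ (u : H) : ℂ).re = (inner ℂ ((u : H)) (T (u : H)) : ℂ).re := by
        rw [hφu]
        have h3 : (inner ℂ ((u : H)) (T (u : H)) : ℂ) =
            (starRingEnd ℂ) (inner ℂ (T (u : H)) (u : H) : ℂ) := (inner_conj_symm _ _).symm
        rw [h3, Complex.conj_re]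
      rw [← hgoal]
      exact hfin
  -- extend part 1 to all of H by density
  have hTc' : ReGE T c := by
    intro ψ
    have hcl : IsClosed {x : H | c * ‖x‖ ^ 2 ≤ (inner ℂ (T x) x : ℂ).re} := by
      apply isClosed_le
      · continuity
      · exact Complex.continuous_re.comp (continuous_inner.comp
          (T.continuous.prodMk continuous_id))
    have hsub : (A.domain : Set H) ⊆ {x : H | c * ‖x‖ ^ 2 ≤ (inner ℂ (T x) x : ℂ).re} :=
      fun x hx => (main ⟨x, hx⟩).1
    have := closure_minimal hsub hcl
    exact this (by rw [hdense.closure_eq]; trivial)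
  -- extend part 3 to all of H by density
  have hTd2 : ∀ x : H, d * ‖T x‖ ^ 2 ≤ (inner ℂ x (T x) : ℂ).re := by
    intro ψ
    have hcl : IsClosed {x : H | d * ‖T x‖ ^ 2 ≤ (inner ℂ x (T x) : ℂ).re} := by
      apply isClosed_le
      · continuity
      · exact Complex.continuous_re.comp (continuous_inner.comp
          (continuous_id.prodMk T.continuous))
    have hsub : (A.domain : Set H) ⊆ {x : H | d * ‖T x‖ ^ 2 ≤ (inner ℂ x (T x) : ℂ).re} :=
      fun x hx => (main ⟨x, hx⟩).2
    have := closure_minimal hsub hcl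
    exact this (by rw [hdense.closure_eq]; trivial)
  -- T is bounded below
  have hlow : ∀ x : H, c * ‖x‖ ≤ ‖T x‖ := by
    intro x
    rcases eq_or_ne x 0 with rfl | hx
    · simp
    · have h1 := hTc' x
      have h2 : (inner ℂ (T x) x : ℂ).re ≤ ‖T x‖ * ‖x‖ := re_inner_le _ _
      have h3 : 0 < ‖x‖ := norm_pos_iff.mpr hx
      nlinarith
  have hanti : AntilipschitzWith (⟨c, hc.le⟩ : NNReal)⁻¹ T := by
    apply ContinuousLinearMap.antilipschitz_of_bound
    intro x
    erw [NNReal.coe_inv, NNReal.coe_mk, inv_mul_eq_div, le_div_iff₀ hc, mul_comm]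
    exact hlow x
  have hdr : (LinearMap.range (T : H →ₗ[ℂ] H)).topologicalClosure = ⊤ := by
    rw [Submodule.topologicalClosure_eq_top_iff, Submodule.eq_bot_iff]
    intro y hy
    have h := hTc' y
    have h0 : (inner ℂ (T y) y : ℂ) = 0 :=
      (Submodule.mem_orthogonal _ y).mp hy (T y) (LinearMap.mem_range_self _ y)
    rw [h0] at h
    simp only [Complex.zero_re] at h
    have : ‖y‖ ^ 2 ≤ 0 := by nlinarith
    have : ‖y‖ = 0 := by nlinarith [norm_nonneg y, sq_nonneg ‖y‖]
    exact norm_eq_zero.mp this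
  have hbij : Function.Bijective T :=
    (T.bijective_iff_dense_range_and_antilipschitz).mpr ⟨hdr, _, hanti⟩
  have hunit : IsUnit T := ContinuousLinearMap.isUnit_iff_bijective.mpr hbij
  have hinv_app : ∀ ψ : H, T (Ring.inverse T ψ) = ψ := by
    intro ψ
    have h1 : T * Ring.inverse T = 1 := Ring.mul_inverse_cancel _ hunit
    calc T (Ring.inverse T ψ) = (T * Ring.inverse T) ψ := rfl
      _ = ψ := by rw [h1]; rfl
  refine ⟨hTc', hunit, ?_⟩
  intro ψ
  have := hTd2 (Ring.inverse T ψ)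
  rwa [hinv_app ψ] at this

end Paper
end
end
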